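/- Let η be an absolutely continuous path on [0,T] and let S be a path on [0,T] of finite p-variation for some p ≥ 1. Then for all 0 ≤ s ≤ t ≤ T, the Riemann sums Σ_{u∈π} η_u (S_{u'} − S_u) converge, as the mesh of the partition π of [s,t] tends to zero, to a limit that is independent of the sequence of partitions (defining the Young integral ∫ₛᵗ η dS). Moreover the integration-by-parts formula ∫ₛᵗ η_u dS_u + ∫ₛᵗ S_u dη_u = η_t S_t − η_s S_s holds, where the second integral is the Stieltjes integral of S against η. -/

import Mathlib

open MeasureTheory Real

/-- A finite partition `P 0 = s ≤ P 1 ≤ ⋯ ≤ P n = t` of the interval `[s,t]`. -/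
def IsPartitionOn (s t : ℝ) (n : ℕ) (P : ℕ → ℝ) : Prop :=
  P 0 = s ∧ P n = t ∧ ∀ i, i < n → P i ≤ P (i + 1)

namespace YoungAux

lemma partition_le {s t : ℝ} {n : ℕ} {P : ℕ → ℝ} (h : IsPartitionOn s t n P) :
    ∀ j, j ≤ n → ∀ i, i ≤ j → P i ≤ P j := by
  intro j
  induction j with
  | zero => intro _ i hi; exact le_of_eq (by rw [Nat.le_zero.mp hi])
  | succ j ih =>
      intro hj i hi
      rcases Nat.eq_or_lt_of_le hi with h1 | h1
      · exact le_of_eq (by rw [h1])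
      · exact (ih (by omega) i (by omega)).trans (h.2.2 j (by omega))

lemma partition_mem {s t : ℝ} {n : ℕ} {P : ℕ → ℝ} (h : IsPartitionOn s t n P)
    {i : ℕ} (hi : i ≤ n) : P i ∈ Set.Icc s t :=
  ⟨h.1 ▸ partition_le h i hi 0 (Nat.zero_le _), h.2.1 ▸ partition_le h n le_rfl i hi⟩

/-- the set of partition sums for the `p`-variation of `S` on `[0,u]`. -/
def varSet (S : ℝ → ℝ) (p u : ℝ) : Set ℝ :=
  {x | ∃ n P, IsPartitionOn 0 u n P ∧
    x = ∑ i ∈ Finset.range n, |S (P (i + 1)) - S (P i)| ^ p}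

noncomputable def pVar (S : ℝ → ℝ) (p u : ℝ) : ℝ := sSup (varSet S p u)

lemma single_mem_varSet {S : ℝ → ℝ} {p u : ℝ} (hu : 0 ≤ u) :
    |S u - S 0| ^ p ∈ varSet S p u := by
  refine ⟨1, fun i => if i = 0 then 0 else u, ⟨by simp, by simp, ?_⟩, by simp⟩
  intro i hi
  interval_cases i
  simpa using hu

lemma varSet_nonempty {S : ℝ → ℝ} {p u : ℝ} (hu : 0 ≤ u) : (varSet S p u).Nonempty :=
  ⟨_, single_mem_varSet hu⟩

/-- appending a point to a partition. -/
lemma append_mem_varSet {S : ℝ → ℝ} {p u v x : ℝ} (huv : u ≤ v) (hx : x ∈ varSet S p u) :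
    x + |S v - S u| ^ p ∈ varSet S p v := by
  obtain ⟨n, P, hP, rfl⟩ := hx
  refine ⟨n + 1, fun i => if i ≤ n then P i else v, ⟨by simp [hP.1], by simp, ?_⟩, ?_⟩
  · intro i hi
    rcases Nat.lt_or_ge i n with h1 | h1
    · simp only [if_pos (by omega : i ≤ n), if_pos (by omega : i + 1 ≤ n)]
      exact hP.2.2 i h1
    · have hin : i = n := by omega
      rw [hin]
      simp only [if_pos le_rfl, if_neg (by omega : ¬ n + 1 ≤ n)]
      exact hP.2.1 ▸ huv
  · rw [Finset.sum_range_succ]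
    congr 1
    · exact Finset.sum_congr rfl fun i hi => by
        have : i < n := Finset.mem_range.mp hi
        simp [if_pos (by omega : i ≤ n), if_pos (by omega : i + 1 ≤ n), this]
    · simp [if_neg (by omega : ¬ n + 1 ≤ n), hP.2.1]

section

variable {S : ℝ → ℝ} {p T C : ℝ}

variable (hC : ∀ (n : ℕ) (P : ℕ → ℝ), IsPartitionOn 0 T n P →
      (∑ i ∈ Finset.range n, |S (P (i + 1)) - S (P i)| ^ p) ≤ C)

include hC

lemma varSet_le {u : ℝ} (huT : u ≤ T) : ∀ x ∈ varSet S p u, x ≤ C := by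
  rintro x hx
  have h2 := append_mem_varSet (S := S) (p := p) huT hx
  obtain ⟨n, P, hP, hsum⟩ := h2
  have := hC n P hP
  have h3 : (0:ℝ) ≤ |S T - S u| ^ p := Real.rpow_nonneg (abs_nonneg _) _
  linarith [hsum ▸ this, hsum ▸ (hC n P hP)]

lemma bddAbove_varSet {u : ℝ} (huT : u ≤ T) : BddAbove (varSet S p u) :=
  ⟨C, varSet_le hC huT⟩

lemma le_pVar {u x : ℝ} (huT : u ≤ T) (hx : x ∈ varSet S p u) : x ≤ pVar S p u :=
  le_csSup (bddAbove_varSet hC huT) hx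

lemma pVar_le {u : ℝ} (hu : 0 ≤ u) (huT : u ≤ T) : pVar S p u ≤ C :=
  csSup_le (varSet_nonempty hu) (varSet_le hC huT)

lemma pVar_nonneg {u : ℝ} (hu : 0 ≤ u) (huT : u ≤ T) : 0 ≤ pVar S p u :=
  le_trans (Real.rpow_nonneg (abs_nonneg _) _) (le_pVar hC huT (single_mem_varSet hu))

lemma pVar_add_le {u v : ℝ} (hu : 0 ≤ u) (huv : u ≤ v) (hvT : v ≤ T) :
    pVar S p u + |S v - S u| ^ p ≤ pVar S p v := by
  have h1 : ∀ x ∈ varSet S p u, x ≤ pVar S p v - |S v - S u| ^ p := by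
    intro x hx
    have := le_pVar hC hvT (append_mem_varSet (S := S) (p := p) huv hx)
    linarith
  have h2 : pVar S p u ≤ pVar S p v - |S v - S u| ^ p :=
    csSup_le (varSet_nonempty hu) h1
  linarith

lemma pVar_mono {u v : ℝ} (hu : 0 ≤ u) (huv : u ≤ v) (hvT : v ≤ T) :
    pVar S p u ≤ pVar S p v := by
  have := pVar_add_le hC hu huv hvT
  have h3 : (0:ℝ) ≤ |S v - S u| ^ p := Real.rpow_nonneg (abs_nonneg _) _
  linarith

lemma abs_S_sub_le (hp : 1 ≤ p) {u v : ℝ} (hu : 0 ≤ u) (huv : u ≤ v) (hvT : v ≤ T) :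
    |S v - S u| ≤ (pVar S p v - pVar S p u) ^ p⁻¹ := by
  have hp0 : (0:ℝ) < p := lt_of_lt_of_le one_pos hp
  have h1 : |S v - S u| ^ p ≤ pVar S p v - pVar S p u := by
    have := pVar_add_le hC hu huv hvT; linarith
  calc |S v - S u| = (|S v - S u| ^ p) ^ p⁻¹ := by
        rw [Real.rpow_rpow_inv (abs_nonneg _) hp0.ne']
    _ ≤ (pVar S p v - pVar S p u) ^ p⁻¹ :=
        Real.rpow_le_rpow (Real.rpow_nonneg (abs_nonneg _) _) h1 (by positivity)

end



lemma rpow_subadd {a b r : ℝ} (ha : 0 ≤ a) (hb : 0 ≤ b) (hr : 0 ≤ r) (hr1 : r ≤ 1) :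
    (a + b) ^ r ≤ a ^ r + b ^ r := by
  lift a to NNReal using ha
  lift b to NNReal using hb
  have := NNReal.rpow_add_le_add_rpow a b hr hr1
  exact_mod_cast this

section

variable {S : ℝ → ℝ} {p T C : ℝ}
variable (hC : ∀ (n : ℕ) (P : ℕ → ℝ), IsPartitionOn 0 T n P →
      (∑ i ∈ Finset.range n, |S (P (i + 1)) - S (P i)| ^ p) ≤ C)
include hC

lemma aesm_S (hp : 1 ≤ p) (hT : 0 ≤ T) :
    AEStronglyMeasurable S (volume.restrict (Set.Icc (0:ℝ) T)) := by
  have hp0 : (0:ℝ) < p := lt_of_lt_of_le one_pos hp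
  haveI : Nonempty (Set.Icc (0:ℝ) T) := ⟨⟨0, le_rfl, hT⟩⟩
  set V : ℝ → ℝ := fun u => pVar S p (max 0 (min u T)) with hV
  have hVmem : ∀ u : ℝ, 0 ≤ max 0 (min u T) ∧ max 0 (min u T) ≤ T := fun u =>
    ⟨le_max_left _ _, max_le hT (min_le_right _ _)⟩
  have hVmono : Monotone V := fun a b hab =>
    pVar_mono hC (hVmem a).1 (max_le_max le_rfl (min_le_min_right _ hab)) (hVmem b).2
  have hVeq : ∀ u ∈ Set.Icc (0:ℝ) T, V u = pVar S p u := by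
    intro u hu
    simp [hV, min_eq_left hu.2, max_eq_right hu.1]
  set h : ℝ → ℝ := fun x => ⨅ u : Set.Icc (0:ℝ) T, (S u + |x - pVar S p u| ^ p⁻¹) with hh
  have hbdd : ∀ x : ℝ,
      BddBelow (Set.range fun u : Set.Icc (0:ℝ) T => S u + |x - pVar S p u| ^ p⁻¹) := by
    intro x
    refine ⟨S 0 - C ^ p⁻¹, ?_⟩
    rintro y ⟨u, rfl⟩
    have h1 : |S u.1 - S 0| ≤ (pVar S p u.1 - pVar S p 0) ^ p⁻¹ :=
      abs_S_sub_le hC hp le_rfl u.2.1 u.2.2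
    have hm : pVar S p 0 ≤ pVar S p u.1 := pVar_mono hC le_rfl u.2.1 u.2.2
    have h2 : (pVar S p u.1 - pVar S p 0) ^ p⁻¹ ≤ C ^ p⁻¹ := by
      apply Real.rpow_le_rpow (by linarith) ?_ (by positivity)
      have := pVar_le hC u.2.1 u.2.2
      have := pVar_nonneg hC (le_refl (0:ℝ)) hT
      linarith
    have h3 : 0 ≤ |x - pVar S p u.1| ^ p⁻¹ := Real.rpow_nonneg (abs_nonneg _) _
    have h4 := abs_le.mp (h1.trans h2) |>.1
    simp only
    linarith
  have hkey : ∀ u ∈ Set.Icc (0:ℝ) T, h (pVar S p u) = S u := by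
    intro u hu
    apply le_antisymm
    · have h1 := ciInf_le (hbdd (pVar S p u)) (⟨u, hu⟩ : Set.Icc (0:ℝ) T)
      simpa [hh, Real.zero_rpow (by positivity : p⁻¹ ≠ (0:ℝ))] using h1
    · apply le_ciInf
      rintro ⟨w, hw⟩
      rcases le_total w u with hwu | huw
      · have h1 : |S u - S w| ≤ (pVar S p u - pVar S p w) ^ p⁻¹ :=
          abs_S_sub_le hC hp hw.1 hwu hu.2
        have h2 : pVar S p w ≤ pVar S p u := pVar_mono hC hw.1 hwu hu.2
        have h3 : |pVar S p u - pVar S p w| = pVar S p u - pVar S p w :=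
          abs_of_nonneg (by linarith)
        have h4 := abs_le.mp h1 |>.2
        simp only
        rw [h3]
        linarith
      · have h1 : |S w - S u| ≤ (pVar S p w - pVar S p u) ^ p⁻¹ :=
          abs_S_sub_le hC hp hu.1 huw hw.2
        have h2 : pVar S p u ≤ pVar S p w := pVar_mono hC hu.1 huw hw.2
        have h3 : |pVar S p u - pVar S p w| = pVar S p w - pVar S p u :=
          abs_of_nonpos (by linarith) |>.trans (by ring)
        have h4 := abs_le.mp h1 |>.1
        simp only
        rw [h3]
        linarith
  have hlip : ∀ x y : ℝ, h x ≤ h y + |x - y| ^ p⁻¹ := by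
    intro x y
    have hstep : ∀ w : Set.Icc (0:ℝ) T,
        h x - |x - y| ^ p⁻¹ ≤ S w + |y - pVar S p w| ^ p⁻¹ := by
      intro w
      have h1 : h x ≤ S w + |x - pVar S p w| ^ p⁻¹ := ciInf_le (hbdd x) w
      have h2 : |x - pVar S p w| ≤ |y - pVar S p w| + |x - y| := by
        have : x - pVar S p w = (y - pVar S p w) + (x - y) := by ring
        rw [this]; exact abs_add_le _ _
      have h3 : |x - pVar S p w| ^ p⁻¹ ≤ (|y - pVar S p w| + |x - y|) ^ p⁻¹ :=
        Real.rpow_le_rpow (abs_nonneg _) h2 (by positivity)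
      have h4 := rpow_subadd (abs_nonneg (y - pVar S p w)) (abs_nonneg (x - y))
        (by positivity : (0:ℝ) ≤ p⁻¹) (by
          rw [inv_le_one_iff₀]; right; exact hp)
      linarith
    have h5 : h x - |x - y| ^ p⁻¹ ≤ h y := le_ciInf hstep
    linarith
  have hcont : Continuous h := by
    rw [Metric.continuous_iff]
    intro x ε hε
    refine ⟨ε ^ p, Real.rpow_pos_of_pos hε p, fun a ha => ?_⟩
    have h1 : |h a - h x| ≤ |a - x| ^ p⁻¹ := by
      rw [abs_sub_le_iff]
      constructor
      · linarith [hlip a x]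
      · rw [abs_sub_comm a x]; linarith [hlip x a]
    have h2 : |a - x| ^ p⁻¹ < (ε ^ p) ^ p⁻¹ := by
      apply Real.rpow_lt_rpow (abs_nonneg _) ?_ (by positivity)
      rwa [Real.dist_eq] at ha
    rw [Real.rpow_rpow_inv hε.le hp0.ne'] at h2
    rw [Real.dist_eq]
    linarith
  have hmeas : Measurable (h ∘ V) := hcont.measurable.comp hVmono.measurable
  refine hmeas.aestronglyMeasurable.congr ?_
  refine ae_restrict_of_forall_mem measurableSet_Icc ?_
  intro u hu
  simp only [Function.comp_apply]
  rw [hVeq u hu, hkey u hu]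

end

end YoungAux

open YoungAux in
/-- Existence of the Young integral `∫ₛᵗ η dS` of an absolutely continuous path `η`
against a path `S` of finite `p`-variation, as the mesh-limit of Riemann sums
`Σ_{u∈π} η_u (S_{u'} − S_u)`, together with the integration-by-parts formula
`∫ₛᵗ η dS + ∫ₛᵗ S dη = η_t S_t − η_s S_s` (the Stieltjes integral of `S` against the
absolutely continuous `η` being `∫ₛᵗ S_u η'_u du`). -/
theorem young_integral_exists_and_integration_by_parts
    (T : ℝ) (hT : 0 < T) (p : ℝ) (hp : 1 ≤ p)
    (η η' S : ℝ → ℝ)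
    (hη : ∀ t ∈ Set.Icc 0 T, η t = η 0 + ∫ s in (0:ℝ)..t, η' s)
    (hη' : IntervalIntegrable η' volume 0 T)
    (hS : ∃ C : ℝ, ∀ (n : ℕ) (P : ℕ → ℝ), IsPartitionOn 0 T n P →
      (∑ i ∈ Finset.range n, |S (P (i + 1)) - S (P i)| ^ p) ≤ C) :
    ∀ s t : ℝ, 0 ≤ s → s ≤ t → t ≤ T →
      ∃ I : ℝ,
        (∀ ε > (0:ℝ), ∃ δ > (0:ℝ), ∀ (n : ℕ) (P : ℕ → ℝ),
          IsPartitionOn s t n P → (∀ i, i < n → P (i + 1) - P i ≤ δ) →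
          |(∑ i ∈ Finset.range n, η (P i) * (S (P (i + 1)) - S (P i))) - I| ≤ ε) ∧
        I + (∫ u in s..t, S u * η' u) = η t * S t - η s * S s := by
  intro s t hs hst htT
  obtain ⟨C, hC⟩ := hS
  have hp0 : (0:ℝ) < p := lt_of_lt_of_le one_pos hp
  have h0T : (0:ℝ) ≤ T := hT.le
  have hC0 : (0:ℝ) ≤ C := le_trans (Real.rpow_nonneg (abs_nonneg _) _)
    (varSet_le hC le_rfl _ (single_mem_varSet h0T))
  have hsT : s ≤ T := hst.trans htT
  have ht0 : (0:ℝ) ≤ t := hs.trans hst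
  -- boundedness of S on [0,T]
  have hB : ∀ u ∈ Set.Icc (0:ℝ) T, |S u| ≤ |S 0| + C ^ p⁻¹ := by
    intro u hu
    have h1 : |S u - S 0| ≤ (pVar S p u - pVar S p 0) ^ p⁻¹ :=
      abs_S_sub_le hC hp le_rfl hu.1 hu.2
    have h2 : (pVar S p u - pVar S p 0) ^ p⁻¹ ≤ C ^ p⁻¹ := by
      have hm := pVar_mono hC le_rfl hu.1 hu.2
      apply Real.rpow_le_rpow (by linarith) ?_ (by positivity)
      have := pVar_le hC hu.1 hu.2
      have := pVar_nonneg hC (le_refl (0:ℝ)) h0T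
      linarith
    calc |S u| = |S 0 + (S u - S 0)| := by ring_nf
    _ ≤ |S 0| + |S u - S 0| := abs_add_le _ _
    _ ≤ |S 0| + C ^ p⁻¹ := by linarith [h1.trans h2]
  set B : ℝ := |S 0| + C ^ p⁻¹ with hBdef
  -- integrability of η' on subintervals
  have hη'sub : ∀ a b : ℝ, a ∈ Set.Icc (0:ℝ) T → b ∈ Set.Icc (0:ℝ) T →
      IntervalIntegrable η' volume a b := by
    intro a b ha hb
    apply hη'.mono_set (Set.uIcc_subset_uIcc ?_ ?_) <;>
      rw [Set.uIcc_of_le h0T]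
    exacts [ha, hb]
  have hSm := aesm_S hC hp h0T
  -- integrability of S * η' on subintervals
  have hint : ∀ a b : ℝ, 0 ≤ a → a ≤ b → b ≤ T →
      IntervalIntegrable (fun u => S u * η' u) volume a b := by
    intro a b ha hab hbT
    have hab' : IntervalIntegrable η' volume a b :=
      hη'sub a b ⟨ha, hab.trans hbT⟩ ⟨ha.trans hab, hbT⟩
    apply IntervalIntegrable.mono_fun' (g := fun u => B * ‖η' u‖) (hab'.norm.const_mul B)
    · have hsub : Set.uIoc a b ⊆ Set.Icc (0:ℝ) T := by
        rw [Set.uIoc_of_le hab]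
        exact (Set.Ioc_subset_Icc_self).trans (Set.Icc_subset_Icc ha hbT)
      exact (hSm.mono_measure (Measure.restrict_mono hsub le_rfl)).mul
        (hab'.def'.aestronglyMeasurable)
    · apply ae_restrict_of_forall_mem measurableSet_uIoc
      intro x hx
      have hx' : x ∈ Set.Icc (0:ℝ) T := by
        rw [Set.uIoc_of_le hab] at hx
        exact (Set.Ioc_subset_Icc_self).trans (Set.Icc_subset_Icc ha hbT) hx
      simp only [Real.norm_eq_abs, abs_mul]
      exact mul_le_mul_of_nonneg_right (hB x hx') (abs_nonneg _)
  set I : ℝ := η t * S t - η s * S s - ∫ u in s..t, S u * η' u with hI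
  refine ⟨I, ?_, by rw [hI]; ring⟩
  intro ε hε
  set νt : ℝ := ∫ u in s..t, |η' u| with hνt
  have hνt0 : 0 ≤ νt := intervalIntegral.integral_nonneg hst (fun u _ => abs_nonneg _)
  set ε' : ℝ := ε / (2 * (νt + 1)) with hε'
  have hε'pos : 0 < ε' := by positivity
  set K : ℝ := C / ε' ^ p * C ^ p⁻¹ with hK
  have hK0 : 0 ≤ K := by positivity
  set ω : ℝ := (ε / 2) / (K + 1) with hω
  have hω0 : 0 < ω := by positivity
  -- uniform continuity of the primitive of |η'|
  set G : ℝ → ℝ := fun x => ∫ u in (0:ℝ)..x, |η' u| with hG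
  have hGc : ContinuousOn G (Set.Icc 0 T) := by
    have h1 := intervalIntegral.continuousOn_primitive_interval' (μ := volume)
      (f := fun u => |η' u|) hη'.abs (Set.left_mem_uIcc)
    rwa [Set.uIcc_of_le h0T] at h1
  obtain ⟨δ, hδ0, hδ⟩ := Metric.uniformContinuousOn_iff.mp
    ((isCompact_Icc).uniformContinuousOn_of_continuous hGc) ω hω0
  refine ⟨δ / 2, by positivity, ?_⟩
  intro n P hP hmesh
  have hPmem : ∀ i, i ≤ n → P i ∈ Set.Icc (0:ℝ) T := fun i hi =>
    ⟨hs.trans (partition_mem hP hi).1, (partition_mem hP hi).2.trans htT⟩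
  have hη'P : ∀ i, i < n → IntervalIntegrable η' volume (P i) (P (i + 1)) :=
    fun i hi => hη'sub _ _ (hPmem i hi.le) (hPmem (i + 1) hi)
  have hintP : ∀ i, i < n → IntervalIntegrable (fun u => S u * η' u) volume (P i) (P (i + 1)) :=
    fun i hi => hint _ _ (hPmem i hi.le).1 (hP.2.2 i hi) (hPmem (i + 1) hi).2
  -- increments of η
  have hηinc : ∀ i, i < n → η (P (i + 1)) - η (P i) = ∫ u in P i..P (i + 1), η' u := by
    intro i hi
    rw [hη _ (hPmem (i + 1) hi), hη _ (hPmem i hi.le)]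
    have h1 := intervalIntegral.integral_interval_sub_left
      (hη'sub 0 (P (i + 1)) (Set.left_mem_Icc.mpr h0T) (hPmem (i + 1) hi))
      (hη'sub 0 (P i) (Set.left_mem_Icc.mpr h0T) (hPmem i hi.le))
    linarith [h1]
  -- Abel summation
  have habel : (∑ i ∈ Finset.range n, η (P i) * (S (P (i + 1)) - S (P i)))
      = η t * S t - η s * S s
        - ∑ i ∈ Finset.range n, S (P (i + 1)) * (η (P (i + 1)) - η (P i)) := by
    have h1 : ∀ i ∈ Finset.range n, η (P i) * (S (P (i + 1)) - S (P i))
        = (η (P (i + 1)) * S (P (i + 1)) - η (P i) * S (P i))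
          - S (P (i + 1)) * (η (P (i + 1)) - η (P i)) := fun i _ => by ring
    rw [Finset.sum_congr rfl h1, Finset.sum_sub_distrib,
      Finset.sum_range_sub (fun i => η (P i) * S (P i)), hP.1, hP.2.1]
  have hsplit : (∫ u in s..t, S u * η' u)
      = ∑ i ∈ Finset.range n, ∫ u in P i..P (i + 1), S u * η' u := by
    rw [intervalIntegral.sum_integral_adjacent_intervals hintP, hP.1, hP.2.1]
  have hEi : ∀ i ∈ Finset.range n, (∫ u in P i..P (i + 1), (S u - S (P (i + 1))) * η' u)
      = (∫ u in P i..P (i + 1), S u * η' u)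
        - S (P (i + 1)) * (η (P (i + 1)) - η (P i)) := by
    intro i hi
    have hi' := Finset.mem_range.mp hi
    rw [hηinc i hi', ← intervalIntegral.integral_const_mul,
      ← intervalIntegral.integral_sub (hintP i hi') ((hη'P i hi').const_mul _)]
    exact intervalIntegral.integral_congr (fun u _ => by ring)
  -- the error representation
  have hErep : (∑ i ∈ Finset.range n, η (P i) * (S (P (i + 1)) - S (P i))) - I
      = ∑ i ∈ Finset.range n, ∫ u in P i..P (i + 1), (S u - S (P (i + 1))) * η' u := by
    rw [Finset.sum_congr rfl hEi, habel, hI, hsplit, Finset.sum_sub_distrib]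
    ring
  -- per-interval quantities
  set a : ℕ → ℝ := fun i => pVar S p (P (i + 1)) - pVar S p (P i) with ha
  have ha0 : ∀ i, i < n → 0 ≤ a i := by
    intro i hi
    have := pVar_mono hC (hPmem i hi.le).1 (hP.2.2 i hi) (hPmem (i + 1) hi).2
    simp only [ha]; linarith
  have haC : ∀ i, i < n → a i ≤ C := by
    intro i hi
    have h1 := pVar_le hC (hPmem (i + 1) hi).1 (hPmem (i + 1) hi).2
    have h2 := pVar_nonneg hC (hPmem i hi.le).1 (hPmem i hi.le).2
    simp only [ha]; linarith
  set ν : ℕ → ℝ := fun i => ∫ u in P i..P (i + 1), |η' u| with hν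
  have hν0 : ∀ i, i < n → 0 ≤ ν i := fun i hi =>
    intervalIntegral.integral_nonneg (hP.2.2 i hi) (fun u _ => abs_nonneg _)
  have hνω : ∀ i, i < n → ν i ≤ ω := by
    intro i hi
    have hGsub : G (P (i + 1)) - G (P i) = ν i := by
      simp only [hG, hν]
      exact intervalIntegral.integral_interval_sub_left
        (hη'sub 0 (P (i + 1)) (Set.left_mem_Icc.mpr h0T) (hPmem (i + 1) hi)).abs
        (hη'sub 0 (P i) (Set.left_mem_Icc.mpr h0T) (hPmem i hi.le)).abs
    have hdist : dist (P (i + 1)) (P i) < δ := by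
      rw [Real.dist_eq, abs_of_nonneg (by linarith [hP.2.2 i hi])]
      linarith [hmesh i hi, hδ0]
    have h2 := hδ (P (i + 1)) (hPmem (i + 1) hi) (P i) (hPmem i hi.le) hdist
    rw [Real.dist_eq] at h2
    have := abs_lt.mp h2
    linarith [hGsub, this.2]
  have hνsum : ∑ i ∈ Finset.range n, ν i = νt := by
    simp only [hν, hνt]
    rw [intervalIntegral.sum_integral_adjacent_intervals
      (fun i hi => (hη'P i hi).abs), hP.1, hP.2.1]
  have hasum : ∑ i ∈ Finset.range n, a i ≤ C := by
    simp only [ha]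
    rw [Finset.sum_range_sub (fun i => pVar S p (P i)), hP.1, hP.2.1]
    have h1 := pVar_le hC ht0 htT
    have h2 := pVar_nonneg hC hs hsT
    linarith
  -- per-term estimate
  have hterm : ∀ i ∈ Finset.range n,
      |∫ u in P i..P (i + 1), (S u - S (P (i + 1))) * η' u| ≤ a i ^ p⁻¹ * ν i := by
    intro i hi
    have hi' := Finset.mem_range.mp hi
    have hab := hP.2.2 i hi'
    have hfi : IntervalIntegrable (fun u => (S u - S (P (i + 1))) * η' u) volume
        (P i) (P (i + 1)) := by
      have heq : (fun u => (S u - S (P (i + 1))) * η' u)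
          = fun u => S u * η' u - S (P (i + 1)) * η' u := funext fun u => by ring
      rw [heq]
      exact (hintP i hi').sub ((hη'P i hi').const_mul _)
    have h1 := intervalIntegral.abs_integral_le_integral_abs (μ := volume)
      (f := fun u => (S u - S (P (i + 1))) * η' u) hab
    have h2 : (∫ u in P i..P (i + 1), |(S u - S (P (i + 1))) * η' u|)
        ≤ ∫ u in P i..P (i + 1), a i ^ p⁻¹ * |η' u| := by
      apply intervalIntegral.integral_mono_on hab hfi.abs
        (((hη'P i hi').abs).const_mul _)
      intro u hu
      rw [abs_mul]
      apply mul_le_mul_of_nonneg_right ?_ (abs_nonneg _)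
      have hu0 : 0 ≤ u := (hPmem i hi'.le).1.trans hu.1
      have huT : u ≤ T := hu.2.trans (hPmem (i + 1) hi').2
      have h3 : |S (P (i + 1)) - S u| ≤ (pVar S p (P (i + 1)) - pVar S p u) ^ p⁻¹ :=
        abs_S_sub_le hC hp hu0 hu.2 (hPmem (i + 1) hi').2
      have h4 : pVar S p (P i) ≤ pVar S p u :=
        pVar_mono hC (hPmem i hi'.le).1 hu.1 huT
      have h5 : pVar S p u ≤ pVar S p (P (i + 1)) :=
        pVar_mono hC hu0 hu.2 (hPmem (i + 1) hi').2
      rw [abs_sub_comm]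
      refine h3.trans (Real.rpow_le_rpow (by linarith) ?_ (by positivity))
      simp only [ha]; linarith
    have h3 : (∫ u in P i..P (i + 1), a i ^ p⁻¹ * |η' u|) = a i ^ p⁻¹ * ν i := by
      simp only [hν]
      exact intervalIntegral.integral_const_mul _ _
    linarith
  -- assemble
  rw [hErep]
  have hsum1 : |∑ i ∈ Finset.range n, ∫ u in P i..P (i + 1), (S u - S (P (i + 1))) * η' u|
      ≤ ∑ i ∈ Finset.range n, a i ^ p⁻¹ * ν i :=
    (Finset.abs_sum_le_sum_abs _ _).trans (Finset.sum_le_sum hterm)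
  -- split into good and bad indices
  have hsplit2 := Finset.sum_filter_add_sum_filter_not (Finset.range n)
    (fun i => ε' ^ p < a i) (fun i => a i ^ p⁻¹ * ν i)
  set Bad := (Finset.range n).filter (fun i => ε' ^ p < a i) with hBad
  have hgood : ∑ i ∈ (Finset.range n).filter (fun i => ¬ ε' ^ p < a i),
      a i ^ p⁻¹ * ν i ≤ ε / 2 := by
    have hg1 : ∑ i ∈ (Finset.range n).filter (fun i => ¬ ε' ^ p < a i),
        a i ^ p⁻¹ * ν i ≤ ∑ i ∈ (Finset.range n).filter (fun i => ¬ ε' ^ p < a i),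
        ε' * ν i := by
      apply Finset.sum_le_sum
      intro i hi
      obtain ⟨hi1, hi2⟩ := Finset.mem_filter.mp hi
      have hi' := Finset.mem_range.mp hi1
      have h1 : a i ^ p⁻¹ ≤ (ε' ^ p) ^ p⁻¹ :=
        Real.rpow_le_rpow (ha0 i hi') (not_lt.mp hi2) (by positivity)
      rw [Real.rpow_rpow_inv hε'pos.le hp0.ne'] at h1
      exact mul_le_mul_of_nonneg_right h1 (hν0 i hi')
    have hg2 : ∑ i ∈ (Finset.range n).filter (fun i => ¬ ε' ^ p < a i), ε' * ν i
        ≤ ∑ i ∈ Finset.range n, ε' * ν i := by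
      apply Finset.sum_le_sum_of_subset_of_nonneg (Finset.filter_subset _ _)
      intro i hi _
      exact mul_nonneg hε'pos.le (hν0 i (Finset.mem_range.mp hi))
    have hg3 : ∑ i ∈ Finset.range n, ε' * ν i = ε' * νt := by
      rw [← Finset.mul_sum, hνsum]
    have hg4 : ε' * νt ≤ ε / 2 := by
      rw [hε', div_mul_eq_mul_div, div_le_div_iff₀ (by positivity) (by norm_num)]
      nlinarith
    linarith
  have hbadcard : (Bad.card : ℝ) * ε' ^ p ≤ C := by
    have h1 : ∑ _i ∈ Bad, ε' ^ p ≤ ∑ i ∈ Bad, a i :=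
      Finset.sum_le_sum fun i hi => (Finset.mem_filter.mp hi).2.le
    have h2 : ∑ i ∈ Bad, a i ≤ ∑ i ∈ Finset.range n, a i :=
      Finset.sum_le_sum_of_subset_of_nonneg (Finset.filter_subset _ _)
        (fun i hi _ => ha0 i (Finset.mem_range.mp hi))
    rw [Finset.sum_const, nsmul_eq_mul] at h1
    linarith
  have hbad : ∑ i ∈ Bad, a i ^ p⁻¹ * ν i ≤ ε / 2 := by
    have hb1 : ∑ i ∈ Bad, a i ^ p⁻¹ * ν i ≤ ∑ _i ∈ Bad, C ^ p⁻¹ * ω := by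
      apply Finset.sum_le_sum
      intro i hi
      have hi' := Finset.mem_range.mp (Finset.mem_filter.mp hi).1
      have h1 : a i ^ p⁻¹ ≤ C ^ p⁻¹ :=
        Real.rpow_le_rpow (ha0 i hi') (haC i hi') (by positivity)
      exact mul_le_mul h1 (hνω i hi') (hν0 i hi') (Real.rpow_nonneg hC0 _)
    rw [Finset.sum_const, nsmul_eq_mul] at hb1
    have hb2 : (Bad.card : ℝ) ≤ C / ε' ^ p := by
      rw [le_div_iff₀ (by positivity)]
      exact hbadcard
    have hb3 : (Bad.card : ℝ) * (C ^ p⁻¹ * ω) ≤ C / ε' ^ p * (C ^ p⁻¹ * ω) :=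
      mul_le_mul_of_nonneg_right hb2 (by positivity)
    have hb4 : C / ε' ^ p * (C ^ p⁻¹ * ω) = K * ω := by rw [hK]; ring
    have hb5 : K * ω ≤ (K + 1) * ω :=
      mul_le_mul_of_nonneg_right (by linarith) hω0.le
    have hb6 : (K + 1) * ω = ε / 2 := by
      rw [hω, mul_div_cancel₀ _ (by positivity : K + 1 ≠ 0)]
    linarith
  calc |∑ i ∈ Finset.range n, ∫ u in P i..P (i + 1), (S u - S (P (i + 1))) * η' u|
      ≤ ∑ i ∈ Finset.range n, a i ^ p⁻¹ * ν i := hsum1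
    _ = (∑ i ∈ Bad, a i ^ p⁻¹ * ν i)
        + ∑ i ∈ (Finset.range n).filter (fun i => ¬ ε' ^ p < a i), a i ^ p⁻¹ * ν i := by
        rw [← hsplit2]
    _ ≤ ε / 2 + ε / 2 := add_le_add hbad hgood
    _ = ε := by ring
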